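/- Let G=(V,E) be a finite connected graph, x₀ ∈ ℝ^V, x̄₀ its average, and λ > 0. The following are equivalent: (1) the constant vector x̄₀·1_V is the unique minimizer over x ∈ ℝ^V of (1/2)‖x − x₀‖₂² + λ‖x‖_TV; (2) ‖x₀ − x̄₀·1_V‖_* ≤ λ; (3) for every nonempty A ⊆ V, |(1/|A|)Σ_{v∈A} x₀(v) − x̄₀| ≤ λ·per(A)/|A|. -/

import Mathlib

open Finset

noncomputable section

/-- Discrete total variation. -/
def tvNorm {V : Type*} [Fintype V] (G : SimpleGraph V) [DecidableRel G.Adj]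
    (x : V → ℝ) : ℝ :=
  (1 / 2) * ∑ v, ∑ w, if G.Adj v w then |x w - x v| else 0

/-- Perimeter of a subset of vertices. -/
def perim {V : Type*} [Fintype V] [DecidableEq V] (G : SimpleGraph V)
    [DecidableRel G.Adj] (A : Finset V) : ℝ :=
  tvNorm G (fun v => if v ∈ A then 1 else 0)

/-- Dual norm of the TV norm on the zero-mean subspace. -/
def dualNorm {V : Type*} [Fintype V] (G : SimpleGraph V) [DecidableRel G.Adj]
    (u : V → ℝ) : ℝ :=
  sSup {r | ∃ x : V → ℝ, (∑ v, x v = 0) ∧ tvNorm G x ≤ 1 ∧ r = ∑ v, x v * u v}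

/-- The ROF (TV-regularized least squares) objective. -/
def rofObjective {V : Type*} [Fintype V] (G : SimpleGraph V) [DecidableRel G.Adj]
    (x₀ : V → ℝ) (lam : ℝ) (x : V → ℝ) : ℝ :=
  (1 / 2) * ∑ v, (x v - x₀ v) ^ 2 + lam * tvNorm G x


section basics
variable {V : Type*} [Fintype V] (G : SimpleGraph V) [DecidableRel G.Adj]

lemma tvNorm_nonneg (x : V → ℝ) : 0 ≤ tvNorm G x := by
  unfold tvNorm
  have : (0:ℝ) ≤ ∑ v, ∑ w, if G.Adj v w then |x w - x v| else 0 := by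
    apply Finset.sum_nonneg; intro v _; apply Finset.sum_nonneg; intro w _
    split <;> positivity
  linarith

lemma tvNorm_congr (x y : V → ℝ) (h : ∀ v w, G.Adj v w → x w - x v = y w - y v) :
    tvNorm G x = tvNorm G y := by
  unfold tvNorm
  congr 1
  apply Finset.sum_congr rfl; intro v _
  apply Finset.sum_congr rfl; intro w _
  split
  · rw [h _ _ ‹_›]
  · rfl

lemma tvNorm_add_const (x : V → ℝ) (c : ℝ) :
    tvNorm G (fun v => x v + c) = tvNorm G x := by
  apply tvNorm_congr; intro v w _; ring

lemma tvNorm_const (c : ℝ) : tvNorm G (fun _ => c) = 0 := by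
  have : tvNorm G (fun _ => c) = tvNorm G (fun _ => (0:ℝ)) := by
    apply tvNorm_congr; intro v w _; ring
  rw [this]; unfold tvNorm; simp

lemma tvNorm_smul (t : ℝ) (x : V → ℝ) :
    tvNorm G (fun v => t * x v) = |t| * tvNorm G x := by
  simp only [tvNorm]
  have h : ∀ v w : V, |t * x w - t * x v| = |t| * |x w - x v| := by
    intro v w; rw [← mul_sub, abs_mul]
  simp_rw [h]
  rw [show |t| * ((1:ℝ)/2 * ∑ v, ∑ w, if G.Adj v w then |x w - x v| else 0)
      = 1/2 * (|t| * ∑ v, ∑ w, if G.Adj v w then |x w - x v| else 0) by ring]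
  congr 1
  rw [Finset.mul_sum]
  refine Finset.sum_congr rfl fun v _ => ?_
  rw [Finset.mul_sum]
  refine Finset.sum_congr rfl fun w _ => ?_
  rw [mul_ite, mul_zero]

lemma tvNorm_neg (x : V → ℝ) : tvNorm G (fun v => - x v) = tvNorm G x := by
  have := tvNorm_smul G (-1) x
  simp at this
  simpa using this

/-- sum over darts equals the double sum. -/
lemma sum_darts_eq (f : V → V → ℝ) :
    ∑ d : G.Dart, f d.fst d.snd = ∑ v, ∑ w, if G.Adj v w then f v w else 0 := by
  classical
  let e : (Σ v : V, {w // G.Adj v w}) ≃ G.Dart :=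
    { toFun := fun s => ⟨(s.fst, s.snd), s.snd.property⟩
      invFun := fun d => ⟨d.fst, d.snd, d.adj⟩
      left_inv := fun s => by ext <;> simp
      right_inv := fun d => by ext <;> simp }
  rw [← Equiv.sum_comp e (fun d => f d.fst d.snd)]
  rw [show (Finset.univ : Finset (Σ v : V, {w // G.Adj v w})) = Finset.univ.sigma (fun _ => Finset.univ) from (Finset.univ_sigma_univ).symm, Finset.sum_sigma]
  apply Finset.sum_congr rfl; intro v _
  have h1 : ∑ w : V, (if G.Adj v w then f v w else 0)
      = ∑ w ∈ Finset.univ.filter (G.Adj v), f v w := (Finset.sum_filter _ _).symm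
  have h2 : ∑ w ∈ Finset.univ.filter (G.Adj v), f v w
      = ∑ w : {w // G.Adj v w}, f v (w : V) :=
    Finset.sum_subtype _ (by simp) _
  rw [h1, h2]
  rfl

end basics
section conn
variable {V : Type*} [Fintype V] (G : SimpleGraph V) [DecidableRel G.Adj]

lemma walk_telescope (x : V → ℝ) : ∀ {v w : V} (p : G.Walk v w),
    |x v - x w| ≤ (p.darts.map (fun d => |x d.snd - x d.fst|)).sum := by
  intro v w p
  induction p with
  | nil => simp
  | @cons a b c h q ih =>
    simp only [SimpleGraph.Walk.darts_cons, List.map_cons, List.sum_cons]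
    calc |x a - x c| ≤ |x a - x b| + |x b - x c| := abs_sub_le _ _ _
    _ ≤ |x b - x a| + (q.darts.map (fun d => |x d.snd - x d.fst|)).sum := by
        rw [abs_sub_comm]; exact add_le_add le_rfl ih
    _ = _ := by ring

lemma sum_darts_tv (x : V → ℝ) :
    ∑ d : G.Dart, |x d.snd - x d.fst| = 2 * tvNorm G x := by
  rw [sum_darts_eq G (fun v w => |x w - x v|)]
  unfold tvNorm; ring

lemma abs_sub_le_two_tv (hG : G.Connected) (x : V → ℝ) (v w : V) :
    |x v - x w| ≤ 2 * tvNorm G x := by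
  classical
  obtain ⟨p⟩ := hG v w
  have hp := p.toPath
  calc |x v - x w| ≤ ((hp : G.Walk v w).darts.map (fun d => |x d.snd - x d.fst|)).sum :=
        walk_telescope G x _
    _ = ∑ d ∈ (hp : G.Walk v w).darts.toFinset, |x d.snd - x d.fst| := by
        rw [List.sum_toFinset _ ?nd]
        case nd =>
          have he : (hp : G.Walk v w).edges.Nodup := hp.property.isTrail.edges_nodup
          exact he.of_map _
    _ ≤ ∑ d : G.Dart, |x d.snd - x d.fst| := by
        apply Finset.sum_le_sum_of_subset_of_nonneg (Finset.subset_univ _)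
        intro d _ _; positivity
    _ = 2 * tvNorm G x := sum_darts_tv G x

lemma abs_le_two_tv_of_mean_zero (hG : G.Connected) (x : V → ℝ)
    (hx : ∑ v, x v = 0) (v : V) : |x v| ≤ 2 * tvNorm G x := by
  have hne : Nonempty V := ⟨v⟩
  have hn : 0 < (Fintype.card V : ℝ) := by
    exact_mod_cast Fintype.card_pos
  have h1 : (Fintype.card V : ℝ) * x v = ∑ w, (x v - x w) := by
    rw [Finset.sum_sub_distrib, hx, sub_zero, Finset.sum_const, Finset.card_univ,
      nsmul_eq_mul]
  have h2 : |∑ w, (x v - x w)| ≤ ∑ w : V, 2 * tvNorm G x :=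
    (Finset.abs_sum_le_sum_abs _ _).trans
      (Finset.sum_le_sum fun w _ => abs_sub_le_two_tv G hG x v w)
  rw [Finset.sum_const, Finset.card_univ, nsmul_eq_mul] at h2
  rw [← h1, abs_mul, abs_of_pos hn] at h2
  exact le_of_mul_le_mul_left h2 hn

lemma walk_crossing [DecidableEq V] {A : Finset V} :
    ∀ {a b : V} (_ : G.Walk a b), a ∈ A → b ∉ A →
      ∃ v w, v ∈ A ∧ w ∉ A ∧ G.Adj v w := by
  intro a b p
  induction p with
  | nil => intro h h'; exact absurd h h'
  | @cons u m c hadj q ih =>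
    intro ha hb
    by_cases hm : m ∈ A
    · exact ih hm hb
    · exact ⟨u, m, ha, hm, hadj⟩

lemma one_le_perim [DecidableEq V] (hG : G.Connected) {A : Finset V}
    (hA : A.Nonempty) (hA' : A ≠ Finset.univ) : 1 ≤ perim G A := by
  classical
  obtain ⟨a, ha⟩ := hA
  obtain ⟨b, hb⟩ : ∃ b, b ∉ A := by
    by_contra h; push_neg at h
    exact hA' (Finset.eq_univ_iff_forall.mpr h)
  obtain ⟨p⟩ := hG a b
  obtain ⟨v, w, hv, hw, hvw⟩ := walk_crossing G p ha hb
  set χ : V → ℝ := fun v => if v ∈ A then 1 else 0 with hχ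
  have hvw' : G.Adj w v := hvw.symm
  have hne : v ≠ w := G.ne_of_adj hvw
  have key : (2:ℝ) ≤ ∑ v', ∑ w', if G.Adj v' w' then |χ w' - χ v'| else 0 := by
    have hterm : ∀ (p q : V), p ∈ A → q ∉ A → G.Adj p q →
        (1:ℝ) ≤ ∑ w', if G.Adj p w' then |χ w' - χ p| else 0 := by
      intro p q hp hq hpq
      have : (if G.Adj p q then |χ q - χ p| else 0) = 1 := by
        simp [hχ, hpq, hp, hq]
      calc (1:ℝ) = if G.Adj p q then |χ q - χ p| else 0 := this.symm
        _ ≤ ∑ w', if G.Adj p w' then |χ w' - χ p| else 0 := by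
            apply Finset.single_le_sum (f := fun w' => if G.Adj p w' then |χ w' - χ p| else 0)
              (fun i _ => by positivity) (Finset.mem_univ q)
    have habs : ∀ p q : V, |χ q - χ p| = |χ p - χ q| := fun p q => abs_sub_comm _ _
    have h1 : (1:ℝ) ≤ ∑ w', if G.Adj v w' then |χ w' - χ v| else 0 := hterm v w hv hw hvw
    have h2 : (1:ℝ) ≤ ∑ w', if G.Adj w w' then |χ w' - χ w| else 0 := by
      -- w ∉ A, v ∈ A, Adj w v ; the term at v is  |χ v - χ w| = 1
      have : (if G.Adj w v then |χ v - χ w| else 0) = 1 := by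
        simp [hχ, hvw', hv, hw]
      calc (1:ℝ) = if G.Adj w v then |χ v - χ w| else 0 := this.symm
        _ ≤ _ := Finset.single_le_sum (f := fun w' => if G.Adj w w' then |χ w' - χ w| else 0)
              (fun i _ => by positivity) (Finset.mem_univ v)
    calc (2:ℝ) = 1 + 1 := by norm_num
      _ ≤ (∑ w', if G.Adj v w' then |χ w' - χ v| else 0)
          + (∑ w', if G.Adj w w' then |χ w' - χ w| else 0) := add_le_add h1 h2
      _ = ∑ v' ∈ ({v, w} : Finset V), ∑ w', if G.Adj v' w' then |χ w' - χ v'| else 0 := by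
          rw [Finset.sum_pair hne]
      _ ≤ _ := by
          apply Finset.sum_le_sum_of_subset_of_nonneg (Finset.subset_univ _)
          intro i _ _
          apply Finset.sum_nonneg; intro j _; positivity
  unfold perim tvNorm
  linarith

end conn
section lc
variable {V : Type*} [Fintype V] [DecidableEq V] (G : SimpleGraph V) [DecidableRel G.Adj]

lemma layer_cake_const (lam : ℝ) (u : V → ℝ) (hu : ∑ v, u v = 0)
    (y : V → ℝ) (m : ℝ) (hconst : ∀ v, y v = m) :
    ∑ v, y v * u v ≤ lam * tvNorm G y := by
  have h1 : ∑ v, y v * u v = 0 := by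
    calc ∑ v, y v * u v = ∑ v, m * u v := by
          exact Finset.sum_congr rfl fun v _ => by rw [hconst]
      _ = m * ∑ v, u v := by rw [Finset.mul_sum]
      _ = 0 := by rw [hu, mul_zero]
  have h2 : tvNorm G y = 0 := by
    rw [show y = (fun _ => m) from funext hconst]
    exact tvNorm_const G m
  rw [h1, h2, mul_zero]

lemma layer_cake [Nonempty V] (lam : ℝ) (u : V → ℝ) (hu : ∑ v, u v = 0)
    (hA : ∀ A : Finset V, A.Nonempty → |∑ v ∈ A, u v| ≤ lam * perim G A)
    (y : V → ℝ) : ∑ v, y v * u v ≤ lam * tvNorm G y := by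
  classical
  suffices H : ∀ (n : ℕ) (y : V → ℝ),
      (Finset.univ.filter
        (fun v => Finset.univ.inf' Finset.univ_nonempty y < y v)).card ≤ n →
      ∑ v, y v * u v ≤ lam * tvNorm G y by
    exact H _ y le_rfl
  intro n
  induction n with
  | zero =>
    intro y hcard
    set m := Finset.univ.inf' Finset.univ_nonempty y with hm
    have hempty : Finset.univ.filter (fun v => m < y v) = ∅ :=
      Finset.card_eq_zero.mp (Nat.le_zero.mp hcard)
    have hconst : ∀ v, y v = m := by
      intro v
      have hnot : ¬ (m < y v) := by
        intro h
        have : v ∈ Finset.univ.filter (fun v => m < y v) := by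
          simp [h]
        rw [hempty] at this; exact absurd this (Finset.notMem_empty v)
      exact le_antisymm (not_lt.mp hnot) (Finset.inf'_le _ (Finset.mem_univ v))
    exact layer_cake_const G lam u hu y m hconst
  | succ n ih =>
    intro y hcard
    set m := Finset.univ.inf' Finset.univ_nonempty y with hm
    set A := Finset.univ.filter (fun v => m < y v) with hAdef
    by_cases hAe : A = ∅
    · have hconst : ∀ v, y v = m := by
        intro v
        have hnot : ¬ (m < y v) := by
          intro h
          have : v ∈ A := by rw [hAdef]; simp [h]
          rw [hAe] at this; exact absurd this (Finset.notMem_empty v)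
        exact le_antisymm (not_lt.mp hnot) (Finset.inf'_le _ (Finset.mem_univ v))
      exact layer_cake_const G lam u hu y m hconst
    · have hAne : A.Nonempty := Finset.nonempty_iff_ne_empty.mpr hAe
      have hmem : ∀ v, v ∈ A ↔ m < y v := by
        intro v; rw [hAdef]; simp
      set t := A.inf' hAne y - m with ht
      have hmle : ∀ v, m ≤ y v := fun v => Finset.inf'_le _ (Finset.mem_univ v)
      have hinfle : ∀ v ∈ A, m + t ≤ y v := by
        intro v hv
        have := Finset.inf'_le y hv
        rw [ht]; linarith
      have htpos : 0 < t := by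
        obtain ⟨v, hv, hveq⟩ := Finset.exists_mem_eq_inf' hAne y
        have h2 : m < y v := (hmem v).mp hv
        rw [ht, hveq]; linarith
      set y' := fun v => if m < y v then y v - t else y v with hy'
      set χ := fun v => if m < y v then (1:ℝ) else 0 with hχ
      have hχper : perim G A = tvNorm G χ := by
        unfold perim
        congr 1
        funext v
        by_cases hv : m < y v
        · rw [if_pos ((hmem v).mpr hv)]; simp [hχ, hv]
        · rw [if_neg (fun h => hv ((hmem v).mp h))]; simp [hχ, hv]
      have hy'ge : ∀ v, m ≤ y' v := by
        intro v
        by_cases hv : m < y v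
        · have hh : y' v = y v - t := by simp only [hy']; rw [if_pos hv]
          rw [hh]
          have := hinfle v ((hmem v).mpr hv); linarith
        · have hh : y' v = y v := by simp only [hy']; rw [if_neg hv]
          rw [hh]; exact hmle v
      -- the minimum of y' is still m
      obtain ⟨v₀, _, hv₀⟩ := Finset.exists_mem_eq_inf' (Finset.univ_nonempty) y
      have hv₀m : y v₀ = m := hv₀.symm
      have hv₀A : ¬ (m < y v₀) := by rw [hv₀m]; exact lt_irrefl m
      have hm' : Finset.univ.inf' Finset.univ_nonempty y' = m := by
        apply le_antisymm
        · have : y' v₀ = m := by simp only [hy']; rw [if_neg hv₀A]; exact hv₀m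
          calc Finset.univ.inf' Finset.univ_nonempty y' ≤ y' v₀ :=
                Finset.inf'_le _ (Finset.mem_univ v₀)
            _ = m := this
        · exact Finset.le_inf' _ _ fun v _ => hy'ge v
      -- strict decrease
      obtain ⟨v₁, hv₁A, hv₁eq⟩ := Finset.exists_mem_eq_inf' hAne y
      have hy'v₁ : y' v₁ = m := by
        simp only [hy']
        rw [if_pos ((hmem v₁).mp hv₁A), ← hv₁eq, ht]; ring
      set A' := Finset.univ.filter (fun v => m < y' v) with hA'def
      have hA'sub : A' ⊆ A := by
        intro v hv
        have h1 : m < y' v := by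
          have := Finset.mem_filter.mp hv; exact this.2
        rw [hmem]
        by_contra hc
        simp only [hy'] at h1
        rw [if_neg hc] at h1
        exact hc h1
      have hv₁notA' : v₁ ∉ A' := by
        intro hc
        have := (Finset.mem_filter.mp hc).2
        rw [hy'v₁] at this; exact lt_irrefl m this
      have hstrict : A'.card < A.card :=
        Finset.card_lt_card ((Finset.ssubset_iff_of_subset hA'sub).mpr
          ⟨v₁, hv₁A, hv₁notA'⟩)
      -- edgewise identity
      have hedge : ∀ v w : V, |y w - y v| = |y' w - y' v| + t * |χ w - χ v| := by
        intro v w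
        by_cases hv : m < y v <;> by_cases hw : m < y w
        · simp only [hy', hχ, if_pos hv, if_pos hw]
          rw [show y w - t - (y v - t) = y w - y v by ring]
          simp
        · have hw' : y w = m := le_antisymm (not_lt.mp hw) (hmle w)
          have hvt : m + t ≤ y v := hinfle v ((hmem v).mpr hv)
          simp only [hy', hχ, if_pos hv, if_neg hw]
          rw [hw']
          rw [abs_of_nonpos (by linarith : m - y v ≤ 0),
              abs_of_nonpos (by linarith : m - (y v - t) ≤ 0),
              abs_of_nonpos (by norm_num : (0:ℝ) - 1 ≤ 0)]
          ring
        · have hv' : y v = m := le_antisymm (not_lt.mp hv) (hmle v)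
          have hwt : m + t ≤ y w := hinfle w ((hmem w).mpr hw)
          simp only [hy', hχ, if_pos hw, if_neg hv]
          rw [hv']
          rw [abs_of_nonneg (by linarith : 0 ≤ y w - m),
              abs_of_nonneg (by linarith : 0 ≤ y w - t - m),
              abs_of_nonneg (by norm_num : (0:ℝ) ≤ 1 - 0)]
          ring
        · have hv' : y v = m := le_antisymm (not_lt.mp hv) (hmle v)
          have hw' : y w = m := le_antisymm (not_lt.mp hw) (hmle w)
          simp only [hy', hχ, if_neg hv, if_neg hw]
          rw [hv', hw']
          simp
      -- tv identity
      have htv : tvNorm G y = tvNorm G y' + t * tvNorm G χ := by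
        unfold tvNorm
        have key : ∀ v w : V, (if G.Adj v w then |y w - y v| else 0)
            = (if G.Adj v w then |y' w - y' v| else 0)
              + t * (if G.Adj v w then |χ w - χ v| else 0) := by
          intro v w
          by_cases h : G.Adj v w
          · rw [if_pos h, if_pos h, if_pos h, hedge v w]
          · rw [if_neg h, if_neg h, if_neg h]; ring
        simp_rw [key, Finset.sum_add_distrib, ← Finset.mul_sum]
        ring
      -- inner product identity
      have hip : ∑ v, y v * u v = (∑ v, y' v * u v) + t * ∑ v ∈ A, u v := by
        have key : ∀ v : V, y v * u v
            = y' v * u v + (if m < y v then t * u v else 0) := by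
          intro v
          by_cases hv : m < y v
          · simp only [hy', if_pos hv]; ring
          · simp only [hy', if_neg hv]; ring
        simp_rw [key, Finset.sum_add_distrib]
        congr 1
        rw [Finset.mul_sum, hAdef, Finset.sum_filter]
      -- apply IH
      have hcard' : (Finset.univ.filter
          (fun v => Finset.univ.inf' Finset.univ_nonempty y' < y' v)).card ≤ n := by
        have heq : Finset.univ.filter
            (fun v => Finset.univ.inf' Finset.univ_nonempty y' < y' v) = A' := by
          rw [hA'def]; congr 1; funext v; rw [hm']
        rw [heq]
        exact Nat.lt_succ_iff.mp (lt_of_lt_of_le hstrict hcard)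
      have hIH : ∑ v, y' v * u v ≤ lam * tvNorm G y' := ih y' hcard'
      have hAu : ∑ v ∈ A, u v ≤ lam * perim G A :=
        le_trans (le_abs_self _) (hA A hAne)
      calc ∑ v, y v * u v = (∑ v, y' v * u v) + t * ∑ v ∈ A, u v := hip
        _ ≤ lam * tvNorm G y' + t * (lam * perim G A) :=
            add_le_add hIH (mul_le_mul_of_nonneg_left hAu htpos.le)
        _ = lam * (tvNorm G y' + t * perim G A) := by ring
        _ = lam * tvNorm G y := by rw [htv, hχper]

end lc

section bdd
variable {V : Type*} [Fintype V] (G : SimpleGraph V) [DecidableRel G.Adj]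

lemma bddAbove_dualSet (hG : G.Connected) (u : V → ℝ) :
    BddAbove {r | ∃ x : V → ℝ, (∑ v, x v = 0) ∧ tvNorm G x ≤ 1 ∧ r = ∑ v, x v * u v} := by
  refine ⟨∑ v, 2 * |u v|, ?_⟩
  rintro r ⟨x, hx0, hx1, rfl⟩
  calc ∑ v, x v * u v ≤ ∑ v, |x v * u v| :=
        Finset.sum_le_sum fun v _ => le_abs_self _
    _ = ∑ v, |x v| * |u v| := by simp [abs_mul]
    _ ≤ ∑ v, 2 * |u v| := by
        apply Finset.sum_le_sum
        intro v _
        apply mul_le_mul_of_nonneg_right _ (abs_nonneg _)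
        calc |x v| ≤ 2 * tvNorm G x := abs_le_two_tv_of_mean_zero G hG x hx0 v
          _ ≤ 2 * 1 := by linarith
          _ = 2 := by norm_num

end bdd

/-- Average consensus via TV regularization: the constant `x̄₀` is the unique
minimizer of the ROF energy iff `‖x₀ - x̄₀ 1‖_* ≤ λ` iff every nonempty `A ⊆ V`
satisfies `|avg_A x₀ - x̄₀| ≤ λ per(A)/|A|`. -/
theorem average_consensus_characterization {V : Type*} [Fintype V] [DecidableEq V]
    (G : SimpleGraph V) [DecidableRel G.Adj] (hG : G.Connected)
    (x₀ : V → ℝ) (lam : ℝ) (hlam : 0 < lam) :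
    ((∀ x : V → ℝ, x ≠ (fun _ => (∑ v, x₀ v) / (Fintype.card V : ℝ)) →
        rofObjective G x₀ lam (fun _ => (∑ v, x₀ v) / (Fintype.card V : ℝ))
          < rofObjective G x₀ lam x)
      ↔ dualNorm G (fun v => x₀ v - (∑ w, x₀ w) / (Fintype.card V : ℝ)) ≤ lam)
    ∧
    (dualNorm G (fun v => x₀ v - (∑ w, x₀ w) / (Fintype.card V : ℝ)) ≤ lam
      ↔ ∀ A : Finset V, A.Nonempty →
          |(∑ v ∈ A, x₀ v) / (A.card : ℝ) - (∑ w, x₀ w) / (Fintype.card V : ℝ)|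
            ≤ lam * perim G A / (A.card : ℝ)) := by
  classical
  have hne : Nonempty V := hG.nonempty
  set N : ℝ := (Fintype.card V : ℝ) with hN
  have hNpos : (0:ℝ) < N := by rw [hN]; exact_mod_cast Fintype.card_pos
  set c : ℝ := (∑ v, x₀ v) / N with hc
  set u : V → ℝ := fun v => x₀ v - c with hudef
  -- zero mean of u
  have hu0 : ∑ v, u v = 0 := by
    simp only [hudef]
    rw [Finset.sum_sub_distrib, Finset.sum_const, Finset.card_univ, nsmul_eq_mul, hc]
    rw [← hN]
    field_simp
    ring
  -- objective expansion
  have expand2 : ∀ x : V → ℝ, rofObjective G x₀ lam x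
      = (1/2) * (∑ v, u v ^ 2)
        + ((1/2) * (∑ v, (x v - c) ^ 2) - (∑ v, (x v - c) * u v)
            + lam * tvNorm G (fun v => x v - c)) := by
    intro x
    simp only [rofObjective]
    have htv : tvNorm G x = tvNorm G (fun v => x v - c) :=
      tvNorm_congr G _ _ (fun v w _ => by show x w - x v = (x w - c) - (x v - c); ring)
    rw [htv]
    have hpt : ∀ v : V, (x v - x₀ v)^2
        = (x v - c)^2 - 2*((x v - c) * u v) + u v ^2 := by
      intro v; simp only [hudef]; ring
    rw [Finset.sum_congr rfl (fun v _ => hpt v)]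
    rw [Finset.sum_add_distrib, Finset.sum_sub_distrib, ← Finset.mul_sum]
    ring
  have Fc : rofObjective G x₀ lam (fun _ => c) = (1/2) * (∑ v, u v ^ 2) := by
    rw [expand2 (fun _ => c)]
    rw [show (fun v : V => (fun _ : V => c) v - c) = (fun _ : V => (0:ℝ)) from
      funext fun v => by simp]
    rw [tvNorm_const]
    simp
  -- the three statements
  set P1 : Prop := (∀ x : V → ℝ, x ≠ (fun _ => c) →
      rofObjective G x₀ lam (fun _ => c) < rofObjective G x₀ lam x) with hP1
  set P2 : Prop := dualNorm G u ≤ lam with hP2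
  set Q3 : Prop := (∀ A : Finset V, A.Nonempty → |∑ v ∈ A, u v| ≤ lam * perim G A)
    with hQ3
  -- Q3 ↔ statement (3)
  have hq3iff : Q3 ↔ (∀ A : Finset V, A.Nonempty →
      |(∑ v ∈ A, x₀ v) / (A.card : ℝ) - c| ≤ lam * perim G A / (A.card : ℝ)) := by
    rw [hQ3]
    apply forall_congr'; intro A
    constructor
    · intro h hAne
      have hcA : (0:ℝ) < A.card := by exact_mod_cast Finset.card_pos.mpr hAne
      have h1 : ∑ v ∈ A, u v = (A.card:ℝ) * ((∑ v ∈ A, x₀ v)/(A.card:ℝ) - c) := by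
        simp only [hudef]
        rw [Finset.sum_sub_distrib, Finset.sum_const, nsmul_eq_mul]
        field_simp
      have h2 := h hAne
      rw [h1, abs_mul, abs_of_pos hcA] at h2
      rw [le_div_iff₀ hcA]
      linarith
    · intro h hAne
      have hcA : (0:ℝ) < A.card := by exact_mod_cast Finset.card_pos.mpr hAne
      have h1 : ∑ v ∈ A, u v = (A.card:ℝ) * ((∑ v ∈ A, x₀ v)/(A.card:ℝ) - c) := by
        simp only [hudef]
        rw [Finset.sum_sub_distrib, Finset.sum_const, nsmul_eq_mul]
        field_simp
      have h2 := h hAne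
      rw [le_div_iff₀ hcA] at h2
      rw [h1, abs_mul, abs_of_pos hcA]
      linarith
  -- Q3 → P1
  have h31 : Q3 → P1 := by
    rw [hQ3, hP1]
    intro q3 x hx
    rw [Fc, expand2 x]
    have hy : ∑ v, (x v - c) * u v ≤ lam * tvNorm G (fun v => x v - c) :=
      layer_cake G lam u hu0 q3 (fun v => x v - c)
    have hpos : 0 < ∑ v, (x v - c)^2 := by
      obtain ⟨v, hv⟩ : ∃ v, x v ≠ c := by
        by_contra h; push_neg at h; exact hx (funext h)
      apply Finset.sum_pos' (fun i _ => sq_nonneg _)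
      exact ⟨v, Finset.mem_univ v,
        lt_of_le_of_ne (sq_nonneg _) (Ne.symm (pow_ne_zero 2 (sub_ne_zero.mpr hv)))⟩
    linarith
  -- Q3 → P2
  have h32 : Q3 → P2 := by
    rw [hQ3, hP2]
    intro q3
    unfold dualNorm
    apply Real.sSup_le _ hlam.le
    rintro r ⟨x, hx0, hx1, rfl⟩
    calc ∑ v, x v * u v ≤ lam * tvNorm G x := layer_cake G lam u hu0 q3 x
      _ ≤ lam * 1 := mul_le_mul_of_nonneg_left hx1 hlam.le
      _ = lam := mul_one lam
  -- common setup for proper subsets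
  have hzsetup : ∀ A : Finset V, A.Nonempty → A ≠ Finset.univ →
      (∑ v, ((fun v => (if v ∈ A then (1:ℝ) else 0) - (A.card:ℝ)/N) v) = 0)
      ∧ tvNorm G (fun v => (if v ∈ A then (1:ℝ) else 0) - (A.card:ℝ)/N) = perim G A
      ∧ (∑ v, ((if v ∈ A then (1:ℝ) else 0) - (A.card:ℝ)/N) * u v = ∑ v ∈ A, u v) := by
    intro A hAne hAuniv
    refine ⟨?_, ?_, ?_⟩
    · simp only
      rw [Finset.sum_sub_distrib, Finset.sum_const, Finset.card_univ, nsmul_eq_mul, ← hN]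
      rw [Finset.sum_boole, Finset.filter_mem_eq_inter, Finset.univ_inter]
      field_simp
      ring
    · unfold perim
      exact tvNorm_congr G _ _ (fun v w _ => by
        show ((if w ∈ A then (1:ℝ) else 0) - (A.card:ℝ)/N)
            - ((if v ∈ A then (1:ℝ) else 0) - (A.card:ℝ)/N)
          = (if w ∈ A then (1:ℝ) else 0) - (if v ∈ A then (1:ℝ) else 0)
        ring)
    · have key : ∀ v : V, ((if v ∈ A then (1:ℝ) else 0) - (A.card:ℝ)/N) * u v
          = (if v ∈ A then u v else 0) - ((A.card:ℝ)/N) * u v := by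
        intro v; by_cases hv : v ∈ A <;> simp [hv] <;> ring
      simp_rw [key]
      rw [Finset.sum_sub_distrib, ← Finset.mul_sum, hu0, mul_zero, sub_zero]
      rw [Finset.sum_ite_mem, Finset.univ_inter]
  -- P1 → Q3
  have h13 : P1 → Q3 := by
    rw [hQ3, hP1]
    intro h1 A hAne
    by_cases hAuniv : A = Finset.univ
    · subst hAuniv
      rw [hu0]
      simpa using mul_nonneg hlam.le (show 0 ≤ perim G univ from tvNorm_nonneg G _)
    · obtain ⟨hz0, htvz, hzu⟩ := hzsetup A hAne hAuniv
      set z : V → ℝ := fun v => (if v ∈ A then (1:ℝ) else 0) - (A.card:ℝ)/N with hz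
      obtain ⟨a, ha⟩ := hAne
      obtain ⟨b, hb⟩ : ∃ b, b ∉ A := by
        by_contra h; push_neg at h
        exact hAuniv (Finset.eq_univ_iff_forall.mpr h)
      have hzab : z a - z b = 1 := by simp [hz, ha, hb]
      have hkey : ∀ s : ℝ, s ≠ 0 →
          0 < (1/2) * (s^2 * ∑ v, z v^2) - s * (∑ v, z v * u v)
            + lam * (|s| * perim G A) := by
        intro s hs
        have hxs : (fun v => c + s * z v) ≠ (fun _ => c) := by
          intro hcon
          have hca := congrFun hcon a
          have hcb := congrFun hcon b
          have : s * (z a - z b) = 0 := by linarith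
          rw [hzab, mul_one] at this
          exact hs this
        have h0 := h1 (fun v => c + s * z v) hxs
        rw [Fc, expand2 (fun v => c + s * z v)] at h0
        simp_rw [show ∀ v : V, c + s * z v - c = s * z v from fun v => by ring] at h0
        rw [tvNorm_smul, htvz] at h0
        have e1 : ∑ v, (s * z v)^2 = s^2 * ∑ v, z v^2 := by
          rw [Finset.mul_sum]; exact Finset.sum_congr rfl fun v _ => by ring
        have e2 : ∑ v, (s * z v) * u v = s * ∑ v, z v * u v := by
          rw [Finset.mul_sum]; exact Finset.sum_congr rfl fun v _ => by ring
        rw [e1, e2] at h0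
        linarith
      have hside : ∀ σ : ℝ, |σ| = 1 → σ * (∑ v, z v * u v) ≤ lam * perim G A := by
        intro σ hσ
        apply le_of_forall_pos_le_add
        intro ε hε
        set K := ∑ v, z v^2 with hKdef
        have hK : 0 ≤ K := Finset.sum_nonneg fun v _ => sq_nonneg _
        have hK1 : (0:ℝ) < K + 1 := by linarith
        set s := 2 * ε / (K + 1) with hsdef
        have hspos : 0 < s := by positivity
        have hσ0 : σ ≠ 0 := by
          intro h; rw [h] at hσ; simp at hσ
        have hσ2 : σ^2 = 1 := by rw [← sq_abs, hσ]; norm_num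
        have hkey' := hkey (σ * s) (mul_ne_zero hσ0 hspos.ne')
        rw [abs_mul, hσ, one_mul, abs_of_pos hspos] at hkey'
        have hsq : (σ * s)^2 = s^2 := by rw [mul_pow, hσ2, one_mul]
        rw [hsq] at hkey'
        have h2 : s * (σ * (∑ v, z v * u v))
            < s * ((1/2) * s * K + lam * perim G A) := by nlinarith [hkey']
        have h1' : σ * (∑ v, z v * u v) < (1/2)*s*K + lam * perim G A :=
          (mul_lt_mul_iff_right₀ hspos).mp h2
        have h3 : (1/2) * s * K = ε * K / (K + 1) := by
          rw [hsdef]; field_simp; try ring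
        have h4 : ε * K / (K + 1) ≤ ε := by
          rw [div_le_iff₀ hK1]; nlinarith
        linarith
      rw [← hzu]
      exact abs_le.mpr ⟨by have := hside (-1) (by norm_num); linarith,
        by have := hside 1 (by norm_num); linarith⟩
  -- P2 → Q3
  have h23 : P2 → Q3 := by
    rw [hQ3, hP2]
    intro h2 A hAne
    by_cases hAuniv : A = Finset.univ
    · subst hAuniv
      rw [hu0]
      simpa using mul_nonneg hlam.le (show 0 ≤ perim G univ from tvNorm_nonneg G _)
    · obtain ⟨hz0, htvz, hzu⟩ := hzsetup A hAne hAuniv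
      set z : V → ℝ := fun v => (if v ∈ A then (1:ℝ) else 0) - (A.card:ℝ)/N with hz
      have hper1 : 1 ≤ perim G A := one_le_perim G hG hAne hAuniv
      have hperpos : 0 < perim G A := lt_of_lt_of_le one_pos hper1
      have hside : ∀ σ : ℝ, |σ| = 1 → σ * (∑ v ∈ A, u v) ≤ lam * perim G A := by
        intro σ hσ
        set x : V → ℝ := fun v => (σ / perim G A) * z v with hx
        have hx0 : ∑ v, x v = 0 := by
          simp only [hx]
          rw [← Finset.mul_sum, hz0, mul_zero]
        have hx1 : tvNorm G x ≤ 1 := by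
          rw [hx, tvNorm_smul, htvz, abs_div, hσ, abs_of_pos hperpos]
          rw [one_div, inv_mul_cancel₀ hperpos.ne']
        have hxval : ∑ v, x v * u v = (σ / perim G A) * ∑ v ∈ A, u v := by
          rw [← hzu, Finset.mul_sum]
          simp only [hx]
          exact Finset.sum_congr rfl fun v _ => by ring
        have hmem : (σ / perim G A) * ∑ v ∈ A, u v ∈
            {r | ∃ x : V → ℝ, (∑ v, x v = 0) ∧ tvNorm G x ≤ 1 ∧ r = ∑ v, x v * u v} :=
          ⟨x, hx0, hx1, hxval.symm⟩
        have hle : (σ / perim G A) * ∑ v ∈ A, u v ≤ dualNorm G u :=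
          le_csSup (bddAbove_dualSet G hG u) hmem
        have hle2 : (σ / perim G A) * ∑ v ∈ A, u v ≤ lam := le_trans hle h2
        have h7 : (σ / perim G A) * (∑ v ∈ A, u v) * perim G A
            = σ * (∑ v ∈ A, u v) := by field_simp
        calc σ * (∑ v ∈ A, u v)
            = (σ / perim G A) * (∑ v ∈ A, u v) * perim G A := h7.symm
          _ ≤ lam * perim G A := mul_le_mul_of_nonneg_right hle2 hperpos.le
      exact abs_le.mpr ⟨by have := hside (-1) (by norm_num); linarith,
        by have := hside 1 (by norm_num); linarith⟩
  constructor
  · exact ⟨fun h1 => h32 (h13 h1), fun h2 => h31 (h23 h2)⟩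
  · exact ⟨fun h2 => hq3iff.mp (h23 h2), fun h3 => h32 (hq3iff.mpr h3)⟩
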